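/- arXiv:1701.06640 — 2 statements merged into one kernel-verified Lean document; each statement's English description precedes it below -/
import Mathlib

section
/- For positive integers k1 < k2, the diameter of the set Δ0 = { Σ_{n≥1} 2(-1)^{n-1}/2^{a1+...+an} : a_i ∈ {k1, k2} } equals 2(2^{k2} - 2^{k1})/(2^{k1+k2} - 1). -/
open Filter Topology

/-- Partial sum `a 0 + ... + a n` of a digit sequence. -/
noncomputable def psum (a : ℕ → ℕ) (n : ℕ) : ℕ := ∑ i ∈ Finset.range (n + 1), a i

/-- Value of the alternating series `Σ_{n≥1} 2(-1)^{n-1}/2^{a1+...+an}`. -/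
noncomputable def val (a : ℕ → ℕ) : ℝ := ∑' n : ℕ, (2 * (-1 : ℝ) ^ n) / 2 ^ (psum a n)

/-- The set `Δ0` of all values of the alternating series over `K`-valued digit sequences. -/
noncomputable def Delta0 (K : Set ℕ) : Set ℝ :=
  { y | ∃ a : ℕ → ℕ, (∀ i, a i ∈ K) ∧ y = val a }

lemma psum_ge (a : ℕ → ℕ) (ha : ∀ i, 1 ≤ a i) (n : ℕ) : n + 1 ≤ psum a n := by
  calc n + 1 = ∑ i ∈ Finset.range (n+1), 1 := by simp
  _ ≤ psum a n := Finset.sum_le_sum fun i _ => ha i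

lemma norm_term (a : ℕ → ℕ) (ha : ∀ i, 1 ≤ a i) (n : ℕ) :
    ‖(2 * (-1 : ℝ) ^ n) / 2 ^ (psum a n)‖ ≤ 2 * (1/2 : ℝ)^(n+1) := by
  have h1 : ((2:ℝ))^(n+1) ≤ 2 ^ (psum a n) := pow_le_pow_right₀ one_le_two (psum_ge a ha n)
  have h2 : (0:ℝ) < 2^(n+1) := by positivity
  have : ‖(2 * (-1 : ℝ) ^ n) / 2 ^ (psum a n)‖ = 2 / 2 ^ (psum a n) := by
    rw [norm_div, norm_mul]
    simp [abs_of_nonneg]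
  rw [this]
  rw [show (2:ℝ) * (1/2)^(n+1) = 2 / 2^(n+1) by rw [div_pow, one_pow]; ring]
  exact div_le_div_of_nonneg_left (by norm_num) h2 h1

lemma summable_val (a : ℕ → ℕ) (ha : ∀ i, 1 ≤ a i) :
    Summable (fun n => (2 * (-1 : ℝ) ^ n) / 2 ^ (psum a n)) := by
  apply Summable.of_norm_bounded (Summable.mul_left 2 ((summable_geometric_of_lt_one (by norm_num) (by norm_num : (1/2:ℝ) < 1)).comp_injective (add_left_injective 1)))
  intro n
  exact norm_term a ha n

lemma abs_val_le (a : ℕ → ℕ) (ha : ∀ i, 1 ≤ a i) : |val a| ≤ 2 := by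
  have hs := summable_val a ha
  have hsn : Summable (fun n : ℕ => ‖(2 * (-1 : ℝ) ^ n) / 2 ^ (psum a n)‖) := hs.abs
  have hhalf : Summable (fun n : ℕ => (1/2:ℝ)^n) :=
    summable_geometric_of_lt_one (by norm_num) (by norm_num)
  have hg : Summable (fun n : ℕ => 2 * (1/2 : ℝ)^(n+1)) :=
    (hhalf.mul_left (2 * (1/2))).congr (fun n => by rw [pow_succ]; ring)
  have h1 : ‖val a‖ ≤ ∑' n, ‖(2 * (-1 : ℝ) ^ n) / 2 ^ (psum a n)‖ := norm_tsum_le_tsum_norm hsn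
  have h2 : ∑' n, ‖(2 * (-1 : ℝ) ^ n) / 2 ^ (psum a n)‖ ≤ ∑' n : ℕ, 2 * (1/2 : ℝ)^(n+1) :=
    Summable.tsum_le_tsum (norm_term a ha) hsn hg
  have h3 : ∑' n : ℕ, 2 * (1/2 : ℝ)^(n+1) = 2 := by
    have : ∀ n : ℕ, 2 * (1/2 : ℝ)^(n+1) = (2 * (1/2)) * (1/2)^n := fun n => by rw [pow_succ]; ring
    rw [tsum_congr this, tsum_mul_left, tsum_geometric_of_lt_one (by norm_num) (by norm_num)]
    norm_num
  calc |val a| = ‖val a‖ := (Real.norm_eq_abs _).symm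
  _ ≤ 2 := by rw [h3] at h2; linarith

lemma val_rec (a : ℕ → ℕ) (ha : ∀ i, 1 ≤ a i) :
    val a = (2 - val (fun n => a (n+1))) / 2 ^ (a 0) := by
  have hs := summable_val a ha
  have ha' : ∀ i, 1 ≤ a (i+1) := fun i => ha _
  have hs' := summable_val (fun n => a (n+1)) ha'
  have hps : ∀ n, psum a (n+1) = a 0 + psum (fun m => a (m+1)) n := by
    intro n
    simp only [psum]
    rw [Finset.sum_range_succ' (fun i => a i) (n+1)]
    ring
  have key : ∀ n, (2 * (-1 : ℝ) ^ (n+1)) / 2 ^ (psum a (n+1))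
      = (-(1 / 2 ^ (a 0))) * ((2 * (-1 : ℝ) ^ n) / 2 ^ (psum (fun m => a (m+1)) n)) := by
    intro n
    rw [hps n, pow_add, pow_succ]
    ring
  rw [val, Summable.tsum_eq_zero_add hs]
  simp only [key]
  rw [tsum_mul_left]
  have : psum a 0 = a 0 := by simp [psum]
  rw [this]
  show (2 * (-1:ℝ)^0) / 2^(a 0) + _ = _
  rw [show val (fun n => a (n+1)) = ∑' n, (2 * (-1 : ℝ) ^ n) / 2 ^ (psum (fun m => a (m+1)) n) from rfl]
  field_simp
  ring

theorem diam_Delta0 (k1 k2 : ℕ) (hk1 : 0 < k1) (hk : k1 < k2) :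
    Metric.diam (Delta0 {k1, k2}) =
      2 * ((2 : ℝ) ^ k2 - (2 : ℝ) ^ k1) / ((2 : ℝ) ^ (k1 + k2) - 1) := by
  have hk2 : 0 < k2 := hk1.trans hk
  set P1 : ℝ := 2 ^ k1 with hP1def
  set P2 : ℝ := 2 ^ k2 with hP2def
  have hP1 : (1:ℝ) < P1 := one_lt_pow₀ one_lt_two hk1.ne'
  have hP2 : (1:ℝ) < P2 := one_lt_pow₀ one_lt_two hk2.ne'
  have hP12 : P1 < P2 := pow_lt_pow_right₀ one_lt_two hk
  have hPK : (1:ℝ) < P1 * P2 := by nlinarith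
  set S := Delta0 {k1, k2} with hSdef
  -- validity
  have hvalid : ∀ a : ℕ → ℕ, (∀ i, a i ∈ ({k1, k2} : Set ℕ)) → ∀ i, 1 ≤ a i := by
    intro a h i
    have := h i
    simp only [Set.mem_insert_iff, Set.mem_singleton_iff] at this
    omega
  have hrange : ∀ a : ℕ → ℕ, (∀ i, a i ∈ ({k1, k2} : Set ℕ)) → ∀ i, k1 ≤ a i ∧ a i ≤ k2 := by
    intro a h i
    have := h i
    simp only [Set.mem_insert_iff, Set.mem_singleton_iff] at this
    omega
  -- membership facts
  have hmemS : ∀ a : ℕ → ℕ, (∀ i, a i ∈ ({k1, k2} : Set ℕ)) → val a ∈ S := by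
    intro a h; exact ⟨a, h, rfl⟩
  have hne : S.Nonempty := ⟨val (fun _ => k1), hmemS _ (fun i => Or.inl rfl)⟩
  have habs : ∀ y ∈ S, |y| ≤ 2 := by
    rintro y ⟨a, ha, rfl⟩
    exact abs_val_le a (hvalid a ha)
  have hbddA : BddAbove S := ⟨2, fun y hy => (abs_le.mp (habs y hy)).2⟩
  have hbddB : BddBelow S := ⟨-2, fun y hy => (abs_le.mp (habs y hy)).1⟩
  set U := sSup S with hU
  set L := sInf S with hL
  have hLU : L ≤ U := csInf_le_csSup hne hbddB hbddA
  have hU2 : U ≤ 2 := csSup_le hne (fun y hy => (abs_le.mp (habs y hy)).2)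
  have hL2 : L ≤ 2 := hLU.trans hU2
  -- recursion structure
  have hstep : ∀ y ∈ S, ∃ a0, (k1 ≤ a0 ∧ a0 ≤ k2) ∧ ∃ y' ∈ S, |y'| ≤ 2 ∧ y = (2 - y') / 2 ^ a0 := by
    rintro y ⟨a, ha, rfl⟩
    refine ⟨a 0, hrange a ha 0, val (fun n => a (n+1)), hmemS _ (fun i => ha (i+1)), ?_, val_rec a (hvalid a ha)⟩
    exact abs_val_le _ (fun i => hvalid a ha (i+1))
  -- U ≤ (2 - L)/P1
  have hUb : U * P1 ≤ 2 - L := by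
    have : U ≤ (2 - L) / P1 := by
      apply csSup_le hne
      intro y hy
      obtain ⟨a0, ⟨h1, h2⟩, y', hy', hy'2, rfl⟩ := hstep y hy
      have hLy : L ≤ y' := csInf_le hbddB hy'
      have hy'le : y' ≤ 2 := (abs_le.mp hy'2).2
      have hpow : P1 ≤ (2:ℝ) ^ a0 := pow_le_pow_right₀ one_le_two h1
      exact div_le_div₀ (by linarith) (by linarith) (by linarith) hpow
    rw [le_div_iff₀ (by linarith)] at this
    linarith
  -- (2 - U)/P2 ≤ L
  have hLb : 2 - U ≤ L * P2 := by
    have : (2 - U) / P2 ≤ L := by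
      apply le_csInf hne
      intro y hy
      obtain ⟨a0, ⟨h1, h2⟩, y', hy', hy'2, rfl⟩ := hstep y hy
      have hUy : y' ≤ U := le_csSup hbddA hy'
      have hpow : (2:ℝ) ^ a0 ≤ P2 := pow_le_pow_right₀ one_le_two h2
      have hpow0 : (0:ℝ) < 2 ^ a0 := by positivity
      exact div_le_div₀ (by linarith) (by linarith) hpow0 hpow
    rw [div_le_iff₀ (by linarith)] at this
    linarith
  -- extremal bounds
  have hUM : U * (P1 * P2 - 1) ≤ 2 * (P2 - 1) := by nlinarith
  have hLm : 2 * (P1 - 1) ≤ L * (P1 * P2 - 1) := by nlinarith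
  -- periodic sequences
  set p : ℕ → ℕ := fun n => if Even n then k1 else k2 with hpdef
  set q : ℕ → ℕ := fun n => if Even n then k2 else k1 with hqdef
  have hpv : ∀ i, p i ∈ ({k1, k2} : Set ℕ) := by
    intro i; by_cases h : Even i <;> simp [hpdef, h]
  have hqv : ∀ i, q i ∈ ({k1, k2} : Set ℕ) := by
    intro i; by_cases h : Even i <;> simp [hqdef, h]
  have hshiftp : (fun n => p (n+1)) = q := by
    funext n; by_cases h : Even n <;> simp [hpdef, hqdef, Nat.even_add_one, h]
  have hshiftq : (fun n => q (n+1)) = p := by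
    funext n; by_cases h : Even n <;> simp [hpdef, hqdef, Nat.even_add_one, h]
  set x := val p with hx
  set y := val q with hy
  have hp0 : p 0 = k1 := by simp [hpdef]
  have hq0 : q 0 = k2 := by simp [hqdef]
  have hxeq : x = (2 - y) / P1 := by
    rw [hx, val_rec p (hvalid p hpv), hshiftp, hp0, hP1def]
  have hyeq : y = (2 - x) / P2 := by
    rw [hy, val_rec q (hvalid q hqv), hshiftq, hq0, hP2def]
  have h1 : x * P1 = 2 - y := by rw [hxeq]; field_simp
  have h2 : y * P2 = 2 - x := by rw [hyeq]; field_simp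
  have hxv : x * (P1 * P2 - 1) = 2 * (P2 - 1) := by linear_combination P2 * h1 - h2
  have hyv : y * (P1 * P2 - 1) = 2 * (P1 - 1) := by linear_combination P1 * h2 - h1
  have hxy : x - y = 2 * (P2 - P1) / (P1 * P2 - 1) := by
    rw [eq_div_iff (by linarith)]
    linear_combination hxv - hyv
  -- diameter computations
  have hsub : S ⊆ Set.Icc L U := fun z hz => ⟨csInf_le hbddB hz, le_csSup hbddA hz⟩
  have hbdd : Bornology.IsBounded S := (Metric.isBounded_Icc L U).subset hsub
  have hgoalrw : (2:ℝ) ^ (k1 + k2) = P1 * P2 := by rw [pow_add]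
  rw [hgoalrw]
  apply le_antisymm
  · calc Metric.diam S ≤ Metric.diam (Set.Icc L U) :=
          Metric.diam_mono hsub (Metric.isBounded_Icc L U)
    _ = U - L := Real.diam_Icc hLU
    _ ≤ 2 * (P2 - P1) / (P1 * P2 - 1) := by
        rw [le_div_iff₀ (by linarith)]
        nlinarith
  · have hd : dist x y ≤ Metric.diam S :=
      Metric.dist_le_diam_of_mem hbdd (hmemS p hpv) (hmemS q hqv)
    have : dist x y = 2 * (P2 - P1) / (P1 * P2 - 1) := by
      rw [Real.dist_eq, hxy, abs_of_nonneg (div_nonneg (by linarith) (by linarith))]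
    linarith
end

section
/- For positive integers k1 < k2, the supremum of the set D_even = { 1/2^{b1} − 1/2^{b1+b2} + 1/2^{b1+b2+b3} − ... : b_i ∈ {k1, k2} } equals (2^{k2} − 1)/(2^{k1+k2} − 1), and its infimum equals (2^{k1} − 1)/(2^{k1+k2} − 1); hence its diameter is (2^{k2} − 2^{k1})/(2^{k1+k2} − 1). -/
open Filter Topology

/-- Value of the series over m ≥ 1 of (-1)^(m-1) / 2^(b1+...+bm). -/
noncomputable def valEven (b : ℕ → ℕ) : ℝ := ∑' m : ℕ, (-1 : ℝ) ^ m / 2 ^ (psum b m)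

noncomputable def Deven (K : Set ℕ) : Set ℝ :=
  { y | ∃ b : ℕ → ℕ, (∀ i, b i ∈ K) ∧ y = valEven b }



lemma psum_succ (b : ℕ → ℕ) (m : ℕ) : psum b (m+1) = psum b m + b (m+1) := by
  simp [psum, Finset.sum_range_succ]

lemma psum_shift (b : ℕ → ℕ) (m : ℕ) :
    psum b (m+1) = b 0 + psum (fun i => b (i+1)) m := by
  have := Finset.sum_range_succ' b (m+1)
  simp only [psum]
  omega

lemma psum_ge_s4 (b : ℕ → ℕ) (h : ∀ i, 1 ≤ b i) (m : ℕ) : m + 1 ≤ psum b m := by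
  induction m with
  | zero => simpa [psum] using h 0
  | succ n ih => rw [psum_succ]; have := h (n+1); omega

lemma norm_term_le (b : ℕ → ℕ) (h : ∀ i, 1 ≤ b i) (m : ℕ) :
    ‖(-1 : ℝ) ^ m / 2 ^ (psum b m)‖ ≤ (1/2 : ℝ) ^ (m+1) := by
  rw [Real.norm_eq_abs, abs_div, abs_pow, abs_pow, abs_neg, abs_one, one_pow, abs_two,
    div_eq_mul_inv, one_mul, one_div, inv_pow,
    inv_le_inv₀ (by positivity) (by positivity)]
  exact pow_le_pow_right₀ one_le_two (psum_ge_s4 b h m)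

lemma summable_term (b : ℕ → ℕ) (h : ∀ i, 1 ≤ b i) :
    Summable (fun m => (-1 : ℝ) ^ m / 2 ^ (psum b m)) := by
  refine Summable.of_norm_bounded (g := fun m => (1/2 : ℝ) ^ (m+1)) ?_ (norm_term_le b h)
  simpa [pow_succ] using summable_geometric_two.mul_right (1/2 : ℝ)

lemma abs_valEven_le (b : ℕ → ℕ) (h : ∀ i, 1 ≤ b i) : |valEven b| ≤ 1 := by
  have h1 : ‖valEven b‖ ≤ ∑' m : ℕ, (1/2 : ℝ) ^ (m+1) := by
    refine (norm_tsum_le_tsum_norm ?_).trans (Summable.tsum_le_tsum (norm_term_le b h) ?_ ?_)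
    · exact (summable_term b h).norm
    · exact (summable_term b h).norm
    · simpa [pow_succ] using summable_geometric_two.mul_right (1/2 : ℝ)
  have h2 : ∑' m : ℕ, (1/2 : ℝ) ^ (m+1) = 1 := by
    simp only [pow_succ]
    rw [tsum_mul_right, tsum_geometric_two]
    norm_num
  calc |valEven b| ≤ ∑' m : ℕ, (1/2 : ℝ) ^ (m+1) := h1
    _ = 1 := h2

lemma valEven_rec (b : ℕ → ℕ) (h : ∀ i, 1 ≤ b i) :
    valEven b = 1/2^(b 0) - 1/2^(b 0) * valEven (fun i => b (i+1)) := by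
  have hs := summable_term b h
  rw [valEven, Summable.tsum_eq_zero_add hs]
  have h0 : (-1 : ℝ) ^ 0 / 2 ^ (psum b 0) = 1/2^(b 0) := by simp [psum]
  have hterm : ∀ n : ℕ, (-1 : ℝ) ^ (n+1) / 2 ^ (psum b (n+1))
      = (-(1/2^(b 0))) * ((-1 : ℝ) ^ n / 2 ^ (psum (fun i => b (i+1)) n)) := by
    intro n
    rw [psum_shift, pow_add, pow_succ]
    ring
  rw [h0]
  simp only [hterm]
  rw [tsum_mul_left]
  rw [valEven]
  ring

lemma bound_iter (k1 k2 : ℕ) (hk1 : 0 < k1) (hk : k1 < k2) (n : ℕ) :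
    ∀ b : ℕ → ℕ, (∀ i, b i = k1 ∨ b i = k2) →
    valEven b ≤ ((2:ℝ)^k2 - 1)/((2:ℝ)^(k1+k2)-1) + 2*(1/2)^n ∧
    ((2:ℝ)^k1 - 1)/((2:ℝ)^(k1+k2)-1) - 2*(1/2)^n ≤ valEven b := by
  set M : ℝ := ((2:ℝ)^k2 - 1)/((2:ℝ)^(k1+k2)-1) with hM
  set mlo : ℝ := ((2:ℝ)^k1 - 1)/((2:ℝ)^(k1+k2)-1) with hmlo
  have h2S : (1:ℝ) < 2^(k1+k2) := by
    apply one_lt_pow₀ one_lt_two; omega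
  have hD : (0:ℝ) < 2^(k1+k2) - 1 := by linarith
  have hMnn : 0 ≤ M := by
    apply div_nonneg _ hD.le
    have : (1:ℝ) ≤ 2^k2 := one_le_pow₀ one_le_two
    linarith
  have hmnn : 0 ≤ mlo := by
    apply div_nonneg _ hD.le
    have : (1:ℝ) ≤ 2^k1 := one_le_pow₀ one_le_two
    linarith
  have hm1 : mlo ≤ 1 := by
    rw [hmlo, div_le_one hD]
    have : (2:ℝ)^k1 ≤ 2^(k1+k2) := pow_le_pow_right₀ one_le_two (by omega)
    linarith
  have hM1 : M ≤ 1 := by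
    rw [hM, div_le_one hD]
    have : (2:ℝ)^k2 ≤ 2^(k1+k2) := pow_le_pow_right₀ one_le_two (by omega)
    linarith
  have key1 : (1/2^k1) * (1 - mlo) = M := by
    rw [hM, hmlo, one_sub_div hD.ne', div_mul_div_comm, one_mul,
      div_eq_div_iff (mul_ne_zero (by positivity) hD.ne') hD.ne', pow_add]
    ring
  have key2 : (1/2^k2) * (1 - M) = mlo := by
    rw [hM, hmlo, one_sub_div hD.ne', div_mul_div_comm, one_mul,
      div_eq_div_iff (mul_ne_zero (by positivity) hD.ne') hD.ne', pow_add]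
    ring
  induction n with
  | zero =>
    intro b hb
    have hb1 : ∀ i, 1 ≤ b i := fun i => by rcases hb i with h | h <;> omega
    have := abs_valEven_le b hb1
    rw [abs_le] at this
    constructor <;> simp <;> nlinarith [this.1, this.2]
  | succ n ih =>
    intro b hb
    have hb1 : ∀ i, 1 ≤ b i := fun i => by rcases hb i with h | h <;> omega
    have hb' : ∀ i, (fun i => b (i+1)) i = k1 ∨ (fun i => b (i+1)) i = k2 :=
      fun i => hb (i+1)
    obtain ⟨ih1, ih2⟩ := ih (fun i => b (i+1)) hb'
    have hrec := valEven_rec b hb1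
    set v' := valEven (fun i => b (i+1)) with hv'
    set c : ℝ := 1/2^(b 0) with hc
    have hcpos : 0 < c := by positivity
    have hcle : c ≤ 1/2^k1 := by
      apply one_div_le_one_div_of_le (by positivity)
      apply pow_le_pow_right₀ one_le_two
      rcases hb 0 with h | h <;> omega
    have hcge : 1/2^k2 ≤ c := by
      apply one_div_le_one_div_of_le (by positivity)
      apply pow_le_pow_right₀ one_le_two
      rcases hb 0 with h | h <;> omega
    have hchalf : c ≤ 1/2 := by
      calc c ≤ 1/2^k1 := hcle
        _ ≤ 1/2^1 := by
            apply one_div_le_one_div_of_le (by positivity)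
            exact pow_le_pow_right₀ one_le_two hk1
        _ = 1/2 := by norm_num
    have hεnn : (0:ℝ) ≤ 2*(1/2)^n := by positivity
    constructor
    · -- upper bound
      rw [hrec]
      have e1 : c * (1 - mlo) ≤ M := by
        calc c * (1 - mlo) ≤ (1/2^k1) * (1 - mlo) :=
              mul_le_mul_of_nonneg_right hcle (by linarith)
          _ = M := key1
      have e2 : c * (mlo - v') ≤ c * (2*(1/2)^n) :=
        mul_le_mul_of_nonneg_left (by linarith) hcpos.le
      have e3 : c * (2*(1/2)^n) ≤ (1/2) * (2*(1/2)^n) :=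
        mul_le_mul_of_nonneg_right hchalf hεnn
      have : c - c * v' = c * (1 - mlo) + c * (mlo - v') := by ring
      rw [this]
      have : (1/2:ℝ) * (2*(1/2)^n) = 2*(1/2)^(n+1) := by ring
      linarith [e1, e2.trans (e3.trans_eq this)]
    · -- lower bound
      rw [hrec]
      have e1 : mlo ≤ c * (1 - M) := by
        calc mlo = (1/2^k2) * (1 - M) := key2.symm
          _ ≤ c * (1 - M) := mul_le_mul_of_nonneg_right hcge (by linarith)
      have e2 : c * (-(2*(1/2)^n)) ≤ c * (M - v') :=
        mul_le_mul_of_nonneg_left (by linarith) hcpos.le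
      have e3 : (1/2:ℝ) * (-(2*(1/2)^n)) ≤ c * (-(2*(1/2)^n)) := by
        rw [mul_comm, mul_comm c]
        apply mul_le_mul_of_nonpos_left hchalf (by positivity |> neg_nonpos_of_nonneg)
      have : c - c * v' = c * (1 - M) + c * (M - v') := by ring
      rw [this]
      have h4 : (1/2:ℝ) * (-(2*(1/2)^n)) = -(2*(1/2)^(n+1)) := by ring
      linarith [e1, (h4 ▸ e3).trans e2]

theorem sup_inf_diam_Deven (k1 k2 : ℕ) (hk1 : 0 < k1) (hk : k1 < k2) :
    sSup (Deven {k1, k2}) = ((2 : ℝ) ^ k2 - 1) / ((2 : ℝ) ^ (k1 + k2) - 1) ∧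
    sInf (Deven {k1, k2}) = ((2 : ℝ) ^ k1 - 1) / ((2 : ℝ) ^ (k1 + k2) - 1) ∧
    Metric.diam (Deven {k1, k2}) =
      ((2 : ℝ) ^ k2 - (2 : ℝ) ^ k1) / ((2 : ℝ) ^ (k1 + k2) - 1) := by
  set M : ℝ := ((2:ℝ)^k2 - 1)/((2:ℝ)^(k1+k2)-1) with hM
  set mlo : ℝ := ((2:ℝ)^k1 - 1)/((2:ℝ)^(k1+k2)-1) with hmlo
  have h2S : (1:ℝ) < 2^(k1+k2) := one_lt_pow₀ one_lt_two (by omega)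
  have hD : (0:ℝ) < 2^(k1+k2) - 1 := by linarith
  -- membership condition rephrased
  have hmem_iff : ∀ b : ℕ → ℕ, (∀ i, b i ∈ ({k1, k2} : Set ℕ)) ↔
      (∀ i, b i = k1 ∨ b i = k2) := by
    intro b
    simp [Set.mem_insert_iff, Set.mem_singleton_iff]
  -- upper and lower bounds for all members
  have hub : ∀ y ∈ Deven {k1, k2}, y ≤ M := by
    rintro y ⟨b, hb, rfl⟩
    rw [hmem_iff] at hb
    by_contra hcon
    push_neg at hcon
    obtain ⟨n, hn⟩ := exists_pow_lt_of_lt_one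
      (show (0:ℝ) < (valEven b - M)/2 by linarith) (by norm_num : (1/2:ℝ) < 1)
    have := (bound_iter k1 k2 hk1 hk n b hb).1
    linarith
  have hlb : ∀ y ∈ Deven {k1, k2}, mlo ≤ y := by
    rintro y ⟨b, hb, rfl⟩
    rw [hmem_iff] at hb
    by_contra hcon
    push_neg at hcon
    obtain ⟨n, hn⟩ := exists_pow_lt_of_lt_one
      (show (0:ℝ) < (mlo - valEven b)/2 by linarith) (by norm_num : (1/2:ℝ) < 1)
    have := (bound_iter k1 k2 hk1 hk n b hb).2
    linarith
  -- the extremal sequences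
  set p : ℕ → ℕ := fun i => if Even i then k1 else k2 with hp
  set q : ℕ → ℕ := fun i => if Even i then k2 else k1 with hq
  have hp1 : ∀ i, 1 ≤ p i := by intro i; simp only [hp]; split <;> omega
  have hq1 : ∀ i, 1 ≤ q i := by intro i; simp only [hq]; split <;> omega
  have hps : (fun i => p (i+1)) = q := by
    funext i
    simp only [hp, hq, Nat.even_add_one]
    by_cases h : Even i <;> simp [h]
  have hqs : (fun i => q (i+1)) = p := by
    funext i
    simp only [hp, hq, Nat.even_add_one]
    by_cases h : Even i <;> simp [h]
  have hp0 : p 0 = k1 := by simp [hp]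
  have hq0 : q 0 = k2 := by simp [hq]
  have eq1 : valEven p = 1/2^k1 - 1/2^k1 * valEven q := by
    have := valEven_rec p hp1
    rwa [hps, hp0] at this
  have eq2 : valEven q = 1/2^k2 - 1/2^k2 * valEven p := by
    have := valEven_rec q hq1
    rwa [hqs, hq0] at this
  have h1ne : ((2:ℝ)^k1) ≠ 0 := by positivity
  have h2ne : ((2:ℝ)^k2) ≠ 0 := by positivity
  have eq1' : (2:ℝ)^k1 * valEven p = 1 - valEven q := by
    rw [eq1]; field_simp
  have eq2' : (2:ℝ)^k2 * valEven q = 1 - valEven p := by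
    rw [eq2]; field_simp
  have hvp : valEven p = M := by
    rw [hM, eq_div_iff hD.ne', pow_add]
    linear_combination ((2:ℝ)^k2) * eq1' - eq2'
  have hvq : valEven q = mlo := by
    rw [hmlo, eq_div_iff hD.ne', pow_add]
    linear_combination ((2:ℝ)^k1) * eq2' - eq1'
  have hMmem : M ∈ Deven {k1, k2} := by
    refine ⟨p, ?_, hvp.symm⟩
    rw [hmem_iff]; intro i; simp only [hp]; split <;> simp
  have hmmem : mlo ∈ Deven {k1, k2} := by
    refine ⟨q, ?_, hvq.symm⟩
    rw [hmem_iff]; intro i; simp only [hq]; split <;> simp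
  have hbddA : BddAbove (Deven {k1, k2}) := ⟨M, fun y hy => hub y hy⟩
  have hbddB : BddBelow (Deven {k1, k2}) := ⟨mlo, fun y hy => hlb y hy⟩
  have hne : (Deven {k1, k2}).Nonempty := ⟨M, hMmem⟩
  have hsup : sSup (Deven {k1, k2}) = M :=
    le_antisymm (csSup_le hne hub) (le_csSup hbddA hMmem)
  have hinf : sInf (Deven {k1, k2}) = mlo :=
    le_antisymm (csInf_le hbddB hmmem) (le_csInf hne hlb)
  have hmm : mlo ≤ M := by
    rw [hM, hmlo]
    have : (2:ℝ)^k1 ≤ 2^k2 := pow_le_pow_right₀ one_le_two hk.le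
    apply div_le_div_of_nonneg_right (by linarith) hD.le
  refine ⟨hsup, hinf, ?_⟩
  have hbdd : Bornology.IsBounded (Deven {k1, k2}) :=
    isBounded_iff_bddBelow_bddAbove.mpr ⟨hbddB, hbddA⟩
  have hle : Metric.diam (Deven {k1, k2}) ≤ M - mlo := by
    apply Metric.diam_le_of_forall_dist_le (by linarith)
    intro x hx y hy
    rw [Real.dist_eq, abs_le]
    constructor <;> [skip; skip] <;>
      · have h1 := hub x hx
        have h2 := hlb x hx
        have h3 := hub y hy
        have h4 := hlb y hy
        linarith
  have hge : M - mlo ≤ Metric.diam (Deven {k1, k2}) := by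
    have := Metric.dist_le_diam_of_mem hbdd hMmem hmmem
    rw [Real.dist_eq, abs_of_nonneg (by linarith)] at this
    exact this
  have : Metric.diam (Deven {k1, k2}) = M - mlo := le_antisymm hle hge
  rw [this, hM, hmlo, div_sub_div_same]
  ring_nf
end
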